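/- Let α ≥ β > 0, C₁ > C₂ > 0, and let h : [0,∞) → ℝ be a nonnegative absolutely continuous function satisfying h'(t) + C₁·min(h(t)^α, h(t)^β) ≤ C₂ for a.e. t > 0. If h(0) ≤ (C₂/C₁)^{1/α}, then h(t) ≤ (C₂/C₁)^{1/α} for all t ≥ 0. -/
import Mathlib


open MeasureTheory

/-- Lemma 5.2(1): if `C₁ > C₂ > 0` and `h 0 ≤ (C₂/C₁)^(1/α)`,
then `h t ≤ (C₂/C₁)^(1/α)` for all `t ≥ 0`. -/
theorem stmt_3 (α β C₁ C₂ : ℝ) (hβ : 0 < β) (hαβ : β ≤ α)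
    (hC₂ : 0 < C₂) (hC : C₂ < C₁)
    (h h' : ℝ → ℝ)
    (hnn : ∀ t : ℝ, 0 ≤ t → 0 ≤ h t)
    (hFTC : ∀ s t : ℝ, 0 ≤ s → s ≤ t → h t - h s = ∫ τ in s..t, h' τ)
    (hInt : ∀ s t : ℝ, 0 ≤ s → s ≤ t → IntervalIntegrable h' volume s t)
    (hineq : ∀ᵐ t ∂(volume.restrict (Set.Ioi (0:ℝ))),
      h' t + C₁ * min (h t ^ α) (h t ^ β) ≤ C₂)
    (h0 : h 0 ≤ (C₂ / C₁) ^ (1 / α)) :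
    ∀ t : ℝ, 0 ≤ t → h t ≤ (C₂ / C₁) ^ (1 / α) := by
  have hα : 0 < α := lt_of_lt_of_le hβ hαβ
  have hC₁ : 0 < C₁ := hC₂.trans hC
  set M : ℝ := (C₂ / C₁) ^ (1 / α) with hMdef
  have hratio : 0 < C₂ / C₁ := div_pos hC₂ hC₁
  have hratio1 : C₂ / C₁ < 1 := (div_lt_one hC₁).mpr hC
  have hM : 0 < M := Real.rpow_pos_of_pos hratio _
  have hMα : M ^ α = C₂ / C₁ := by
    rw [hMdef, ← Real.rpow_mul hratio.le, one_div, inv_mul_cancel₀ hα.ne', Real.rpow_one]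
  -- key pointwise bound
  have hkey : ∀ x : ℝ, M ≤ x → C₂ / C₁ ≤ min (x ^ α) (x ^ β) := by
    intro x hx
    have hx0 : 0 < x := hM.trans_le hx
    rcases le_or_gt x 1 with hx1 | hx1
    · have h1 : M ^ α ≤ x ^ α := Real.rpow_le_rpow hM.le hx hα.le
      have h2 : x ^ α ≤ x ^ β := Real.rpow_le_rpow_of_exponent_ge hx0 hx1 hαβ
      rw [← hMα]
      exact le_min h1 (h1.trans h2)
    · have h1 : (1:ℝ) ≤ x ^ α := Real.one_le_rpow hx1.le hα.le
      have h2 : (1:ℝ) ≤ x ^ β := Real.one_le_rpow hx1.le hβ.le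
      exact le_min ((hratio1.le).trans h1) ((hratio1.le).trans h2)
  intro t₀ ht₀
  by_contra hcon
  push_neg at hcon
  have ht₀pos : 0 < t₀ := by
    rcases ht₀.lt_or_eq with h | h
    · exact h
    · exact absurd hcon (by rw [← h]; exact not_lt.mpr h0)
  -- continuity of h on [0, t₀]
  have hcont : ContinuousOn h (Set.Icc 0 t₀) := by
    have hc : ContinuousOn (fun x => h 0 + ∫ τ in (0:ℝ)..x, h' τ) (Set.uIcc 0 t₀) :=
      (continuousOn_const.add (intervalIntegral.continuousOn_primitive_interval'
        (hInt 0 t₀ le_rfl ht₀) Set.left_mem_uIcc))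
    rw [Set.uIcc_of_le ht₀] at hc
    refine hc.congr fun x hx => ?_
    linarith [hFTC 0 x le_rfl hx.1]
  set S : Set ℝ := Set.Icc 0 t₀ ∩ h ⁻¹' Set.Iic M with hSdef
  have hSclosed : IsClosed S := hcont.preimage_isClosed_of_isClosed isClosed_Icc isClosed_Iic
  have hScompact : IsCompact S :=
    isCompact_Icc.of_isClosed_subset hSclosed Set.inter_subset_left
  have hSne : S.Nonempty := ⟨0, ⟨le_rfl, ht₀⟩, h0⟩
  set s := sSup S with hsdef
  have hsS : s ∈ S := hScompact.sSup_mem hSne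
  have hs0 : 0 ≤ s := hsS.1.1
  have hst₀ : s ≤ t₀ := hsS.1.2
  have hsM : h s ≤ M := hsS.2
  -- on (s, t₀], h > M
  have hgt : ∀ τ, τ ∈ Set.Ioc s t₀ → M < h τ := by
    intro τ hτ
    by_contra hle
    push_neg at hle
    have : τ ∈ S := ⟨⟨hs0.trans hτ.1.le, hτ.2⟩, hle⟩
    exact absurd (le_csSup hScompact.bddAbove this) (not_le.mpr hτ.1)
  -- h' ≤ 0 a.e. on Ioc s t₀
  have hae : ∀ᵐ τ ∂(volume.restrict (Set.Ioc s t₀)), h' τ ≤ 0 := by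
    have hsub : Set.Ioc s t₀ ⊆ Set.Ioi (0:ℝ) := fun x hx => lt_of_le_of_lt hs0 hx.1
    have h1 : ∀ᵐ τ ∂(volume.restrict (Set.Ioc s t₀)),
        h' τ + C₁ * min (h τ ^ α) (h τ ^ β) ≤ C₂ :=
      ae_restrict_of_ae_restrict_of_subset hsub hineq
    have h2 : ∀ᵐ τ ∂(volume.restrict (Set.Ioc s t₀)), τ ∈ Set.Ioc s t₀ :=
      ae_restrict_mem measurableSet_Ioc
    filter_upwards [h1, h2] with τ hτ1 hτ2
    have hmin := hkey (h τ) (hgt τ hτ2).le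
    have : C₂ ≤ C₁ * min (h τ ^ α) (h τ ^ β) := by
      rw [div_le_iff₀ hC₁] at hmin; linarith [hmin]
    linarith
  -- hence the integral is nonpositive
  have haeIcc : ∀ᵐ τ ∂(volume.restrict (Set.Icc s t₀)), 0 ≤ -h' τ := by
    rw [← Measure.restrict_congr_set Ioc_ae_eq_Icc]
    filter_upwards [hae] with τ hτ; linarith
  have hintle : (∫ τ in s..t₀, h' τ) ≤ 0 := by
    have := intervalIntegral.integral_nonneg_of_ae_restrict (f := fun τ => -h' τ) hst₀ haeIcc
    rw [intervalIntegral.integral_neg] at this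
    linarith
  have := hFTC s t₀ hs0 hst₀
  have : h t₀ ≤ h s := by linarith
  exact absurd hcon (not_lt.mpr (this.trans hsM))
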